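/- (Smoothness framework) Suppose f is twice continuously differentiable on (0,∞). For any θ, v ∈ ℝ^{S×A} and any state s ∈ S, the second derivative at l = 0 of the map l ↦ V_f^{π_{θ+lv}}(s) satisfies | d²/dl² V_f^{π_{θ+lv}}(s) |_{l=0} | ≤ (4γ‖v‖₂/(1−γ)²) · ‖D D_f(θ)[v]‖_∞ + (8γ‖v‖₂²/(1−γ)³) · ‖D_f(θ)‖_∞ + (1/(1−γ)) · ‖D² D_f(θ)[v,v]‖_∞. -/

import Mathlib

open Finset

/-- The softmax policy `π_θ(a|s) = exp(θ_{sa})/∑_{a'} exp(θ_{sa'})`. -/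
noncomputable def softmaxPolicy {S A : Type*} [Fintype A]
    (θ : S × A → ℝ) (s : S) (a : A) : ℝ :=
  Real.exp (θ (s, a)) / ∑ a' : A, Real.exp (θ (s, a'))

/-- The `f`-divergence `D_f(p,q) := ∑_a q(a) f(p(a)/q(a))` of two probability vectors. -/
noncomputable def fDiv {A : Type*} [Fintype A] (f : ℝ → ℝ) (p q : A → ℝ) : ℝ :=
  ∑ a : A, q a * f (p a / q a)

/-- `π` is a policy: each `π(·|s)` is a strictly positive probability distribution on `A`. -/
def IsPolicy {S A : Type*} [Fintype A] (π : S → A → ℝ) : Prop :=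
  (∀ s a, 0 < π s a) ∧ ∀ s, ∑ a : A, π s a = 1

/-- `Vf` satisfies the Bellman equation of the regularizer value function `V_f^{π}`:
`V_f^π(s) = D_f(π(·|s),π_ref(·|s)) + γ ∑_a π(a|s) ∑_{s'} P(s'|s,a) V_f^π(s')`. -/
def IsRegularizerValue {S A : Type*} [Fintype S] [Fintype A]
    (P : S → A → S → ℝ) (γ : ℝ) (f : ℝ → ℝ)
    (πref π : S → A → ℝ) (Vf : S → ℝ) : Prop :=
  ∀ s, Vf s = fDiv f (π s) (πref s) +
      γ * ∑ a : A, π s a * ∑ s' : S, P s a s' * Vf s'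

/-! ### Auxiliary material for the proof of the smoothness framework -/

section SmoothAux
set_option linter.unusedSectionVars false
set_option maxHeartbeats 1000000

lemma sfw_iteratedDeriv_two (g : ℝ → ℝ) : iteratedDeriv 2 g = deriv (deriv g) := by
  rw [show (2 : ℕ) = 1 + 1 from rfl, iteratedDeriv_succ, iteratedDeriv_one]

lemma sfw_contDiff2_diffs {g : ℝ → ℝ} (hg : ContDiff ℝ 2 g) :
    Differentiable ℝ g ∧ Differentiable ℝ (deriv g) := by
  have h2 : (2 : WithTop ℕ∞) = 1 + 1 := by norm_num
  rw [h2, contDiff_succ_iff_deriv] at hg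
  exact ⟨hg.1, hg.2.2.differentiable one_ne_zero⟩

variable {S A : Type*} [Fintype A] [Nonempty A]

/-- The softmax policy along the line `l ↦ θ + l • v`. -/
noncomputable def sfwP (θ v : S × A → ℝ) (l : ℝ) (s : S) (a : A) : ℝ :=
  softmaxPolicy (fun sa => θ sa + l * v sa) s a

/-- First derivative in `l` of `sfwP`. -/
noncomputable def sfwQ (θ v : S × A → ℝ) (l : ℝ) (s : S) (a : A) : ℝ :=
  sfwP θ v l s a * (v (s, a) - ∑ b : A, sfwP θ v l s b * v (s, b))

/-- Second derivative in `l` of `sfwP`. -/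
noncomputable def sfwR (θ v : S × A → ℝ) (l : ℝ) (s : S) (a : A) : ℝ :=
  sfwQ θ v l s a * (v (s, a) - ∑ b : A, sfwP θ v l s b * v (s, b)) -
    sfwP θ v l s a * (∑ b : A, sfwQ θ v l s b * v (s, b))

lemma sfw_expsum_pos (θ v : S × A → ℝ) (l : ℝ) (s : S) :
    0 < ∑ a' : A, Real.exp (θ (s, a') + l * v (s, a')) :=
  Finset.sum_pos (fun _ _ => Real.exp_pos _) univ_nonempty

lemma sfwP_pos (θ v : S × A → ℝ) (l : ℝ) (s : S) (a : A) : 0 < sfwP θ v l s a :=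
  div_pos (Real.exp_pos _) (sfw_expsum_pos θ v l s)

lemma sfwP_sum (θ v : S × A → ℝ) (l : ℝ) (s : S) : ∑ a : A, sfwP θ v l s a = 1 := by
  unfold sfwP softmaxPolicy
  rw [← Finset.sum_div]
  exact div_self (ne_of_gt (sfw_expsum_pos θ v l s))

lemma sfwP_hasDerivAt (θ v : S × A → ℝ) (l : ℝ) (s : S) (a : A) :
    HasDerivAt (fun l => sfwP θ v l s a) (sfwQ θ v l s a) l := by
  have hN : ∀ b : A, HasDerivAt (fun l => Real.exp (θ (s, b) + l * v (s, b)))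
      (Real.exp (θ (s, b) + l * v (s, b)) * v (s, b)) l := by
    intro b
    exact ((hasDerivAt_mul_const (v (s, b))).const_add (θ (s, b))).exp
  have hZ : HasDerivAt (fun l => ∑ b : A, Real.exp (θ (s, b) + l * v (s, b)))
      (∑ b : A, Real.exp (θ (s, b) + l * v (s, b)) * v (s, b)) l :=
    HasDerivAt.fun_sum fun b _ => hN b
  have h := (hN a).div hZ (ne_of_gt (sfw_expsum_pos θ v l s))
  refine h.congr_deriv (Eq.symm ?_)
  unfold sfwQ sfwP softmaxPolicy
  set Z := ∑ b : A, Real.exp (θ (s, b) + l * v (s, b)) with hZdef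
  have hZ0 : Z ≠ 0 := ne_of_gt (sfw_expsum_pos θ v l s)
  have hsum : ∑ b : A, Real.exp (θ (s, b) + l * v (s, b)) / Z * v (s, b)
      = (∑ b : A, Real.exp (θ (s, b) + l * v (s, b)) * v (s, b)) / Z := by
    rw [Finset.sum_div]
    exact Finset.sum_congr rfl fun b _ => by ring
  rw [hsum]
  field_simp

lemma sfwQ_hasDerivAt (θ v : S × A → ℝ) (l : ℝ) (s : S) (a : A) :
    HasDerivAt (fun l => sfwQ θ v l s a) (sfwR θ v l s a) l := by
  have hg : HasDerivAt (fun l => ∑ b : A, sfwP θ v l s b * v (s, b))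
      (∑ b : A, sfwQ θ v l s b * v (s, b)) l :=
    HasDerivAt.fun_sum fun b _ => (sfwP_hasDerivAt θ v l s b).mul_const (v (s, b))
  have h := (sfwP_hasDerivAt θ v l s a).mul ((hasDerivAt_const l (v (s, a))).sub hg)
  refine h.congr_deriv (Eq.symm ?_)
  unfold sfwR
  simp only [Pi.sub_apply]
  ring

lemma sfwP_contDiff (θ v : S × A → ℝ) (s : S) (a : A) :
    ContDiff ℝ 2 fun l => sfwP θ v l s a := by
  have haff : ∀ b : A, ContDiff ℝ 2 fun l : ℝ => Real.exp (θ (s, b) + l * v (s, b)) := by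
    intro b
    exact Real.contDiff_exp.comp (contDiff_const.add (contDiff_id.mul contDiff_const))
  unfold sfwP softmaxPolicy
  exact (haff a).div (ContDiff.sum fun b _ => haff b)
    fun l => ne_of_gt (sfw_expsum_pos θ v l s)

lemma sfwP_mean_abs_le (θ v : S × A → ℝ) (l : ℝ) (s : S) {b : ℝ}
    (hb : ∀ sa, |v sa| ≤ b) : |∑ a : A, sfwP θ v l s a * v (s, a)| ≤ b := by
  calc |∑ a : A, sfwP θ v l s a * v (s, a)| ≤ ∑ a : A, |sfwP θ v l s a * v (s, a)| :=
        Finset.abs_sum_le_sum_abs _ _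
    _ ≤ ∑ a : A, sfwP θ v l s a * b := by
        refine Finset.sum_le_sum fun a _ => ?_
        rw [abs_mul, abs_of_pos (sfwP_pos θ v l s a)]
        exact mul_le_mul_of_nonneg_left (hb _) (sfwP_pos θ v l s a).le
    _ = b := by rw [← Finset.sum_mul, sfwP_sum, one_mul]

lemma sfwQ_abs_sum_le (θ v : S × A → ℝ) (l : ℝ) (s : S) {b : ℝ}
    (hb : ∀ sa, |v sa| ≤ b) : ∑ a : A, |sfwQ θ v l s a| ≤ 2 * b := by
  have h : ∀ a : A, |sfwQ θ v l s a| ≤ sfwP θ v l s a * (2 * b) := by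
    intro a
    unfold sfwQ
    rw [abs_mul, abs_of_pos (sfwP_pos θ v l s a)]
    refine mul_le_mul_of_nonneg_left ?_ (sfwP_pos θ v l s a).le
    calc |v (s, a) - ∑ b' : A, sfwP θ v l s b' * v (s, b')|
        ≤ |v (s, a)| + |∑ b' : A, sfwP θ v l s b' * v (s, b')| := abs_sub _ _
      _ ≤ b + b := add_le_add (hb _) (sfwP_mean_abs_le θ v l s hb)
      _ = 2 * b := by ring
  calc ∑ a : A, |sfwQ θ v l s a| ≤ ∑ a : A, sfwP θ v l s a * (2 * b) :=
        Finset.sum_le_sum fun a _ => h a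
    _ = 2 * b := by rw [← Finset.sum_mul, sfwP_sum, one_mul]

lemma sfwR_abs_sum_le (θ v : S × A → ℝ) (l : ℝ) (s : S) {b : ℝ}
    (hb : ∀ sa, |v sa| ≤ b) (hb0 : 0 ≤ b) : ∑ a : A, |sfwR θ v l s a| ≤ 8 * b ^ 2 := by
  have hqv : |∑ b' : A, sfwQ θ v l s b' * v (s, b')| ≤ 2 * b * b := by
    calc |∑ b' : A, sfwQ θ v l s b' * v (s, b')|
        ≤ ∑ b' : A, |sfwQ θ v l s b'| * |v (s, b')| := by
          refine (Finset.abs_sum_le_sum_abs _ _).trans ?_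
          exact Finset.sum_le_sum fun b' _ => le_of_eq (abs_mul _ _)
      _ ≤ ∑ b' : A, |sfwQ θ v l s b'| * b :=
          Finset.sum_le_sum fun b' _ => mul_le_mul_of_nonneg_left (hb _) (abs_nonneg _)
      _ = (∑ b' : A, |sfwQ θ v l s b'|) * b := by rw [Finset.sum_mul]
      _ ≤ 2 * b * b := mul_le_mul_of_nonneg_right (sfwQ_abs_sum_le θ v l s hb) hb0
  have h : ∀ a : A, |sfwR θ v l s a| ≤ |sfwQ θ v l s a| * (2 * b)
      + sfwP θ v l s a * (2 * b * b) := by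
    intro a
    unfold sfwR
    refine (abs_sub _ _).trans (add_le_add ?_ ?_)
    · rw [abs_mul]
      refine mul_le_mul_of_nonneg_left ?_ (abs_nonneg _)
      calc |v (s, a) - ∑ b' : A, sfwP θ v l s b' * v (s, b')|
          ≤ |v (s, a)| + |∑ b' : A, sfwP θ v l s b' * v (s, b')| := abs_sub _ _
        _ ≤ b + b := add_le_add (hb _) (sfwP_mean_abs_le θ v l s hb)
        _ = 2 * b := by ring
    · rw [abs_mul, abs_of_pos (sfwP_pos θ v l s a)]
      exact mul_le_mul_of_nonneg_left hqv (sfwP_pos θ v l s a).le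
  calc ∑ a : A, |sfwR θ v l s a|
      ≤ ∑ a : A, (|sfwQ θ v l s a| * (2 * b) + sfwP θ v l s a * (2 * b * b)) :=
        Finset.sum_le_sum fun a _ => h a
    _ = (∑ a : A, |sfwQ θ v l s a|) * (2 * b) + (∑ a : A, sfwP θ v l s a) * (2 * b * b) := by
        rw [Finset.sum_add_distrib, Finset.sum_mul, Finset.sum_mul]
    _ ≤ 2 * b * (2 * b) + 1 * (2 * b * b) := by
        refine add_le_add (mul_le_mul_of_nonneg_right (sfwQ_abs_sum_le θ v l s hb)
          (by positivity)) ?_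
        rw [sfwP_sum]
    _ ≤ 8 * b ^ 2 := by nlinarith

lemma sfw_fDiv_contDiff (θ v : S × A → ℝ) (πref : S → A → ℝ)
    (hπref : ∀ s a, 0 < πref s a) (f : ℝ → ℝ) (hf : ContDiffOn ℝ 2 f (Set.Ioi 0)) (s' : S) :
    ContDiff ℝ 2 fun l => fDiv f (sfwP θ v l s') (πref s') := by
  unfold fDiv
  refine ContDiff.sum fun a _ => contDiff_const.mul ?_
  have hg : ContDiff ℝ 2 fun l => sfwP θ v l s' a / πref s' a :=
    (sfwP_contDiff θ v s' a).div_const _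
  rw [contDiff_iff_contDiffAt]
  intro l
  refine (hf.contDiffAt (isOpen_Ioi.mem_nhds ?_)).comp l hg.contDiffAt
  exact Set.mem_Ioi.2 (div_pos (sfwP_pos θ v l s' a) (hπref s' a))

end SmoothAux

section SmoothOp
set_option linter.unusedSectionVars false
set_option maxHeartbeats 1000000

variable {S : Type*} [Fintype S] [Nonempty S]

/-- matrix-to-operator, hand rolled to avoid `Matrix` norm instances. -/
noncomputable def sfwMulVecL (K : S → S → ℝ) : (S → ℝ) →L[ℝ] (S → ℝ) :=
  LinearMap.toContinuousLinearMap
    { toFun := fun x s => ∑ s' : S, K s s' * x s'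
      map_add' := by
        intro x y; funext s
        simp [mul_add, Finset.sum_add_distrib]
      map_smul' := by
        intro c x; funext s
        simp only [Pi.smul_apply, smul_eq_mul, RingHom.id_apply]
        rw [Finset.mul_sum]
        exact Finset.sum_congr rfl fun s' _ => by ring }

lemma sfwMulVecL_apply (K : S → S → ℝ) (x : S → ℝ) (s : S) :
    sfwMulVecL K x s = ∑ s' : S, K s s' * x s' := by
  simp [sfwMulVecL]

/-- `sfwMulVecL` as a continuous linear map. -/
noncomputable def sfwMulVecCLM : (S → S → ℝ) →L[ℝ] ((S → ℝ) →L[ℝ] (S → ℝ)) :=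
  LinearMap.toContinuousLinearMap
    { toFun := fun K => sfwMulVecL K
      map_add' := by
        intro K K'; ext x s
        simp [sfwMulVecL_apply, add_mul, Finset.sum_add_distrib]
      map_smul' := by
        intro c K; ext x s
        simp only [sfwMulVecL_apply, ContinuousLinearMap.coe_smul', Pi.smul_apply,
          smul_eq_mul, RingHom.id_apply]
        rw [Finset.mul_sum]
        exact Finset.sum_congr rfl fun s' _ => by ring }

lemma sfwMulVecL_contDiff {n : ℕ} {K : ℝ → S → S → ℝ} (hK : ContDiff ℝ n K) :
    ContDiff ℝ n fun l => sfwMulVecL (K l) := by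
  have : (fun l => sfwMulVecL (K l)) = fun l => sfwMulVecCLM (K l) := by
    funext l; simp [sfwMulVecCLM]
  rw [this]
  exact sfwMulVecCLM.contDiff.comp hK

lemma sfwMulVecL_norm_le (K : S → S → ℝ) (hK0 : ∀ s s', 0 ≤ K s s')
    (hK1 : ∀ s, ∑ s' : S, K s s' = 1) : ‖sfwMulVecL K‖ ≤ 1 := by
  refine ContinuousLinearMap.opNorm_le_bound _ zero_le_one fun x => ?_
  rw [one_mul]
  refine (pi_norm_le_iff_of_nonneg (norm_nonneg x)).2 fun s => ?_
  rw [sfwMulVecL_apply, Real.norm_eq_abs]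
  calc |∑ s' : S, K s s' * x s'| ≤ ∑ s' : S, |K s s' * x s'| := Finset.abs_sum_le_sum_abs _ _
    _ ≤ ∑ s' : S, K s s' * ‖x‖ := by
        refine Finset.sum_le_sum fun s' _ => ?_
        rw [abs_mul, abs_of_nonneg (hK0 s s')]
        refine mul_le_mul_of_nonneg_left ?_ (hK0 s s')
        calc |x s'| = ‖x s'‖ := (Real.norm_eq_abs _).symm
          _ ≤ ‖x‖ := norm_le_pi_norm x s'
    _ = ‖x‖ := by rw [← Finset.sum_mul, hK1, one_mul]

variable {A : Type*} [Fintype A] [Nonempty A]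

lemma sfw_value_contDiff
    (P : S → A → S → ℝ) (hP : ∀ s a, (∀ s', 0 ≤ P s a s') ∧ ∑ s' : S, P s a s' = 1)
    (γ : ℝ) (hγ0 : 0 ≤ γ) (hγ1 : γ < 1)
    (p : ℝ → S → A → ℝ) (hp2 : ∀ s a, ContDiff ℝ 2 fun l => p l s a)
    (hppos : ∀ l s a, 0 < p l s a) (hpsum : ∀ l s, ∑ a : A, p l s a = 1)
    (Dv : ℝ → S → ℝ) (hD : ∀ s, ContDiff ℝ 2 fun l => Dv l s)
    (V : ℝ → S → ℝ)
    (hBell : ∀ l s, V l s = Dv l s + γ * ∑ a : A, p l s a * ∑ s' : S, P s a s' * V l s')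
    (s₀ : S) : ContDiff ℝ 2 fun l => V l s₀ := by
  classical
  set K : ℝ → S → S → ℝ := fun l s s' => ∑ a : A, p l s a * P s a s' with hKdef
  have hK0 : ∀ l s s', 0 ≤ K l s s' := fun l s s' =>
    Finset.sum_nonneg fun a _ => mul_nonneg (hppos l s a).le ((hP s a).1 s')
  have hK1 : ∀ l s, ∑ s' : S, K l s s' = 1 := by
    intro l s
    rw [Finset.sum_comm]
    calc ∑ a : A, ∑ s' : S, p l s a * P s a s'
        = ∑ a : A, p l s a * ∑ s' : S, P s a s' :=
          Finset.sum_congr rfl fun a _ => (Finset.mul_sum _ _ _).symm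
      _ = 1 := by
          rw [← hpsum l s]
          exact Finset.sum_congr rfl fun a _ => by rw [(hP s a).2, mul_one]
  set T : ℝ → (S → ℝ) →L[ℝ] (S → ℝ) := fun l => sfwMulVecL (K l) with hTdef
  have hKcd : ContDiff ℝ 2 K :=
    contDiff_pi.2 fun s => contDiff_pi.2 fun s' =>
      ContDiff.sum fun a _ => (hp2 s a).mul contDiff_const
  have hTcd : ContDiff ℝ 2 T := sfwMulVecL_contDiff hKcd
  set Aop : ℝ → (S → ℝ) →L[ℝ] (S → ℝ) := fun l => 1 - γ • T l with hAdef
  have hAcd : ContDiff ℝ 2 Aop := contDiff_const.sub (hTcd.const_smul γ)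
  have hlt : ∀ l, ‖γ • T l‖ < 1 := by
    intro l
    calc ‖γ • T l‖ ≤ ‖γ‖ * ‖T l‖ := ContinuousLinearMap.opNorm_smul_le _ _
      _ ≤ γ * 1 := by
          rw [Real.norm_eq_abs, abs_of_nonneg hγ0]
          exact mul_le_mul_of_nonneg_left (sfwMulVecL_norm_le _ (hK0 l) (hK1 l)) hγ0
      _ < 1 := by linarith
  have hUnit : ∀ l, IsUnit (Aop l) := fun l =>
    isUnit_one_sub_of_norm_lt_one (x := γ • T l) (hlt l)
  have hAV : ∀ l, Aop l (fun s => V l s) = fun s => Dv l s := by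
    intro l
    funext s
    have hTV : T l (fun s => V l s) s = ∑ a : A, p l s a * ∑ s' : S, P s a s' * V l s' := by
      rw [hTdef]
      rw [sfwMulVecL_apply]
      rw [show ∑ s' : S, K l s s' * V l s'
          = ∑ s' : S, ∑ a : A, p l s a * P s a s' * V l s' from
        Finset.sum_congr rfl fun s' _ => by rw [hKdef]; rw [Finset.sum_mul]]
      rw [Finset.sum_comm]
      exact Finset.sum_congr rfl fun a _ => by
        rw [Finset.mul_sum]
        exact Finset.sum_congr rfl fun s' _ => by ring
    have : Aop l (fun s => V l s) s = V l s - γ * (T l (fun s => V l s) s) := by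
      simp [hAdef, ContinuousLinearMap.sub_apply, ContinuousLinearMap.smul_apply]
    rw [this, hTV, hBell l s]
    ring
  have hVeq : ∀ l, (fun s => V l s) = Ring.inverse (Aop l) (fun s => Dv l s) := by
    intro l
    rw [← hAV l]
    have : Ring.inverse (Aop l) (Aop l fun s => V l s)
        = (Ring.inverse (Aop l) * Aop l) (fun s => V l s) := rfl
    rw [this, Ring.inverse_mul_cancel _ (hUnit l)]
    rfl
  have hDcd : ContDiff ℝ 2 fun l => (fun s => Dv l s) := contDiff_pi.2 hD
  have hmain : ContDiff ℝ 2 fun l => Ring.inverse (Aop l) (fun s => Dv l s) := by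
    rw [contDiff_iff_contDiffAt]
    intro l₀
    have hinv : ContDiffAt ℝ 2 (fun l => Ring.inverse (Aop l)) l₀ := by
      obtain ⟨u, hu⟩ := hUnit l₀
      have h1 : ContDiffAt ℝ 2 Ring.inverse ((u : (S → ℝ) →L[ℝ] (S → ℝ))) :=
        contDiffAt_ringInverse ℝ u
      rw [hu] at h1
      exact h1.comp l₀ hAcd.contDiffAt
    exact hinv.clm_apply hDcd.contDiffAt
  have heq : (fun l => V l s₀) = fun l => (Ring.inverse (Aop l) fun s => Dv l s) s₀ :=
    funext fun l => congrFun (hVeq l) s₀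
  rw [heq]
  exact (ContinuousLinearMap.proj s₀ : (S → ℝ) →L[ℝ] ℝ).contDiff.comp hmain

end SmoothOp
section Core
set_option linter.unusedSectionVars false
set_option maxHeartbeats 1000000

variable {S A : Type*} [Fintype S] [Fintype A] [Nonempty S] [Nonempty A]

lemma sfw_abs_le_ciSup (g : S → ℝ) (s' : S) : |g s'| ≤ ⨆ s'' : S, |g s''| :=
  le_ciSup (Set.Finite.bddAbove (Set.finite_range fun s'' => |g s''|)) s'

lemma sfw_ciSup_abs_nonneg (g : S → ℝ) : 0 ≤ ⨆ s'' : S, |g s''| :=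
  le_trans (abs_nonneg (g (Classical.arbitrary S))) (sfw_abs_le_ciSup g _)

lemma sfw_core
    (P : S → A → S → ℝ) (hP : ∀ s a, (∀ s', 0 ≤ P s a s') ∧ ∑ s' : S, P s a s' = 1)
    (γ : ℝ) (hγ0 : 0 ≤ γ) (hγ1 : γ < 1)
    (b : ℝ) (hb0 : 0 ≤ b)
    (p q r : ℝ → S → A → ℝ)
    (hppos : ∀ l s a, 0 < p l s a) (hpsum : ∀ l s, ∑ a : A, p l s a = 1)
    (hqsum : ∀ l s, ∑ a : A, |q l s a| ≤ 2 * b)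
    (hrsum : ∀ l s, ∑ a : A, |r l s a| ≤ 8 * b ^ 2)
    (Dc D1 D2 V V1 V2 : ℝ → S → ℝ)
    (hBell : ∀ l s, V l s = Dc l s + γ * ∑ a : A, p l s a * ∑ s' : S, P s a s' * V l s')
    (hE1 : ∀ l s, V1 l s = D1 l s + γ * ∑ a : A,
      (q l s a * (∑ s' : S, P s a s' * V l s') + p l s a * (∑ s' : S, P s a s' * V1 l s')))
    (hE2 : ∀ s, V2 0 s = D2 0 s + γ * ∑ a : A,
      (r 0 s a * (∑ s' : S, P s a s' * V 0 s') + q 0 s a * (∑ s' : S, P s a s' * V1 0 s') +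
        (q 0 s a * (∑ s' : S, P s a s' * V1 0 s') + p 0 s a * (∑ s' : S, P s a s' * V2 0 s'))))
    (s : S) :
    |V2 0 s| ≤ 4 * γ * b / (1 - γ) ^ 2 * (⨆ s' : S, |D1 0 s'|) +
      8 * γ * b ^ 2 / (1 - γ) ^ 3 * (⨆ s' : S, |Dc 0 s'|) +
      1 / (1 - γ) * (⨆ s' : S, |D2 0 s'|) := by
  have hu : 0 < 1 - γ := by linarith
  -- bounds on P-averages
  have hPx : ∀ (x : S → ℝ) (c : ℝ), (∀ s', |x s'| ≤ c) → ∀ s₀ a,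
      |∑ s' : S, P s₀ a s' * x s'| ≤ c := by
    intro x c hc s₀ a
    calc |∑ s' : S, P s₀ a s' * x s'| ≤ ∑ s' : S, |P s₀ a s' * x s'| :=
          Finset.abs_sum_le_sum_abs _ _
      _ ≤ ∑ s' : S, P s₀ a s' * c := by
          refine Finset.sum_le_sum fun s' _ => ?_
          rw [abs_mul, abs_of_nonneg ((hP s₀ a).1 s')]
          exact mul_le_mul_of_nonneg_left (hc s') ((hP s₀ a).1 s')
      _ = c := by rw [← Finset.sum_mul, (hP s₀ a).2, one_mul]
  have hpy : ∀ l s₀ (y : A → ℝ) (c : ℝ), (∀ a, |y a| ≤ c) →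
      |∑ a : A, p l s₀ a * y a| ≤ c := by
    intro l s₀ y c hc
    calc |∑ a : A, p l s₀ a * y a| ≤ ∑ a : A, |p l s₀ a * y a| := Finset.abs_sum_le_sum_abs _ _
      _ ≤ ∑ a : A, p l s₀ a * c := by
          refine Finset.sum_le_sum fun a _ => ?_
          rw [abs_mul, abs_of_pos (hppos l s₀ a)]
          exact mul_le_mul_of_nonneg_left (hc a) (hppos l s₀ a).le
      _ = c := by rw [← Finset.sum_mul, hpsum, one_mul]
  have hgen : ∀ (w : A → ℝ) (W : ℝ) (y : A → ℝ) (c : ℝ), 0 ≤ c → (∀ a, |y a| ≤ c) →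
      (∑ a : A, |w a| ≤ W) → |∑ a : A, w a * y a| ≤ W * c := by
    intro w W y c hc0 hc hW
    calc |∑ a : A, w a * y a| ≤ ∑ a : A, |w a| * |y a| := by
          refine (Finset.abs_sum_le_sum_abs _ _).trans ?_
          exact Finset.sum_le_sum fun a _ => le_of_eq (abs_mul _ _)
      _ ≤ ∑ a : A, |w a| * c :=
          Finset.sum_le_sum fun a _ => mul_le_mul_of_nonneg_left (hc a) (abs_nonneg _)
      _ = (∑ a : A, |w a|) * c := by rw [Finset.sum_mul]
      _ ≤ W * c := mul_le_mul_of_nonneg_right hW hc0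
  set n0 := ⨆ s'' : S, |V 0 s''| with hn0
  set n1 := ⨆ s'' : S, |V1 0 s''| with hn1
  set n2 := ⨆ s'' : S, |V2 0 s''| with hn2
  set d0 := ⨆ s'' : S, |Dc 0 s''| with hd0
  set d1 := ⨆ s'' : S, |D1 0 s''| with hd1
  set d2 := ⨆ s'' : S, |D2 0 s''| with hd2
  have hn0' : 0 ≤ n0 := sfw_ciSup_abs_nonneg _
  have hn1' : 0 ≤ n1 := sfw_ciSup_abs_nonneg _
  have hn2' : 0 ≤ n2 := sfw_ciSup_abs_nonneg _
  have hd0' : 0 ≤ d0 := sfw_ciSup_abs_nonneg _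
  have hd1' : 0 ≤ d1 := sfw_ciSup_abs_nonneg _
  have hd2' : 0 ≤ d2 := sfw_ciSup_abs_nonneg _
  -- step 0
  have h0 : (1 - γ) * n0 ≤ d0 := by
    have hstep : ∀ s₀, |V 0 s₀| ≤ d0 + γ * n0 := by
      intro s₀
      rw [hBell 0 s₀]
      refine (abs_add_le _ _).trans (add_le_add (sfw_abs_le_ciSup (Dc 0) s₀) ?_)
      rw [abs_mul, abs_of_nonneg hγ0]
      refine mul_le_mul_of_nonneg_left ?_ hγ0
      exact hpy 0 s₀ _ n0 fun a => hPx (V 0) n0 (fun s' => sfw_abs_le_ciSup (V 0) s') s₀ a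
    have := ciSup_le hstep
    rw [← hn0] at this
    linarith
  -- step 1
  have h1 : (1 - γ) * n1 ≤ d1 + 2 * b * γ * n0 := by
    have hstep : ∀ s₀, |V1 0 s₀| ≤ d1 + γ * (2 * b * n0 + n1) := by
      intro s₀
      rw [hE1 0 s₀]
      refine (abs_add_le _ _).trans (add_le_add (sfw_abs_le_ciSup (D1 0) s₀) ?_)
      rw [abs_mul, abs_of_nonneg hγ0]
      refine mul_le_mul_of_nonneg_left ?_ hγ0
      rw [Finset.sum_add_distrib]
      refine (abs_add_le _ _).trans ?_
      have t1 : |∑ a : A, q 0 s₀ a * (∑ s' : S, P s₀ a s' * V 0 s')| ≤ 2 * b * n0 :=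
        hgen _ (2 * b) _ n0 hn0' (fun a => hPx (V 0) n0 (fun s' => sfw_abs_le_ciSup (V 0) s') s₀ a)
          (hqsum 0 s₀)
      have t2 : |∑ a : A, p 0 s₀ a * (∑ s' : S, P s₀ a s' * V1 0 s')| ≤ n1 :=
        hpy 0 s₀ _ n1 fun a => hPx (V1 0) n1 (fun s' => sfw_abs_le_ciSup (V1 0) s') s₀ a
      linarith
    have := ciSup_le hstep
    rw [← hn1] at this
    linarith
  -- step 2
  have h2 : (1 - γ) * n2 ≤ d2 + γ * (8 * b ^ 2 * n0 + 4 * b * n1) := by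
    have hstep : ∀ s₀, |V2 0 s₀| ≤ d2 + γ * (8 * b ^ 2 * n0 + 2 * b * n1 + (2 * b * n1 + n2)) := by
      intro s₀
      rw [hE2 s₀]
      refine (abs_add_le _ _).trans (add_le_add (sfw_abs_le_ciSup (D2 0) s₀) ?_)
      rw [abs_mul, abs_of_nonneg hγ0]
      refine mul_le_mul_of_nonneg_left ?_ hγ0
      rw [Finset.sum_add_distrib, Finset.sum_add_distrib]
      have t0 : |∑ a : A, r 0 s₀ a * (∑ s' : S, P s₀ a s' * V 0 s')| ≤ 8 * b ^ 2 * n0 :=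
        hgen _ (8 * b ^ 2) _ n0 hn0' (fun a => hPx (V 0) n0 (fun s' => sfw_abs_le_ciSup (V 0) s') s₀ a)
          (hrsum 0 s₀)
      have t1 : |∑ a : A, q 0 s₀ a * (∑ s' : S, P s₀ a s' * V1 0 s')| ≤ 2 * b * n1 :=
        hgen _ (2 * b) _ n1 hn1' (fun a => hPx (V1 0) n1 (fun s' => sfw_abs_le_ciSup (V1 0) s') s₀ a)
          (hqsum 0 s₀)
      have t2 : |∑ a : A, p 0 s₀ a * (∑ s' : S, P s₀ a s' * V2 0 s')| ≤ n2 :=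
        hpy 0 s₀ _ n2 fun a => hPx (V2 0) n2 (fun s' => sfw_abs_le_ciSup (V2 0) s') s₀ a
      calc |∑ a : A, r 0 s₀ a * (∑ s' : S, P s₀ a s' * V 0 s') +
            ∑ a : A, q 0 s₀ a * (∑ s' : S, P s₀ a s' * V1 0 s') +
            (∑ a : A, (q 0 s₀ a * (∑ s' : S, P s₀ a s' * V1 0 s') +
              p 0 s₀ a * (∑ s' : S, P s₀ a s' * V2 0 s')))|
          ≤ |∑ a : A, r 0 s₀ a * (∑ s' : S, P s₀ a s' * V 0 s')| +
            |∑ a : A, q 0 s₀ a * (∑ s' : S, P s₀ a s' * V1 0 s')| +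
            |∑ a : A, (q 0 s₀ a * (∑ s' : S, P s₀ a s' * V1 0 s') +
              p 0 s₀ a * (∑ s' : S, P s₀ a s' * V2 0 s'))| :=
            (abs_add_le _ _).trans (add_le_add (abs_add_le _ _) le_rfl)
        _ ≤ 8 * b ^ 2 * n0 + 2 * b * n1 + (2 * b * n1 + n2) := by
            refine add_le_add (add_le_add t0 t1) ?_
            rw [Finset.sum_add_distrib]
            exact (abs_add_le _ _).trans (add_le_add t1 t2)
    have := ciSup_le hstep
    rw [← hn2] at this
    linarith
  -- combine
  have hfinal : n2 * (1 - γ) ^ 3 ≤ 4 * γ * b * (1 - γ) * d1 + 8 * γ * b ^ 2 * d0 +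
      (1 - γ) ^ 2 * d2 := by
    have e0 : (1 - γ) * n0 ≤ d0 := h0
    have e1 : (1 - γ) ^ 2 * n1 ≤ (1 - γ) * d1 + 2 * b * γ * d0 := by
      have := mul_le_mul_of_nonneg_left h1 hu.le
      nlinarith [mul_le_mul_of_nonneg_left e0 (mul_nonneg (mul_nonneg (by norm_num : (0:ℝ) ≤ 2) hb0) hγ0)]
    have e2 := mul_le_mul_of_nonneg_left h2 (sq_nonneg (1 - γ))
    have k1 : 4 * γ * b * ((1 - γ) ^ 2 * n1) ≤ 4 * γ * b * ((1 - γ) * d1 + 2 * b * γ * d0) :=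
      mul_le_mul_of_nonneg_left e1 (by positivity)
    have k0 : 8 * γ * b ^ 2 * (1 - γ) * ((1 - γ) * n0) ≤ 8 * γ * b ^ 2 * (1 - γ) * d0 :=
      mul_le_mul_of_nonneg_left e0 (by positivity)
    have hγle : γ ≤ 1 := hγ1.le
    nlinarith [k1, k0, e2, mul_nonneg hd0' (mul_nonneg hγ0 (mul_nonneg hb0 hb0))]
  have hVle : |V2 0 s| ≤ n2 := sfw_abs_le_ciSup (V2 0) s
  have hrhs : 4 * γ * b / (1 - γ) ^ 2 * d1 + 8 * γ * b ^ 2 / (1 - γ) ^ 3 * d0 +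
      1 / (1 - γ) * d2 = (4 * γ * b * (1 - γ) * d1 + 8 * γ * b ^ 2 * d0 +
      (1 - γ) ^ 2 * d2) / (1 - γ) ^ 3 := by
    field_simp
  rw [hrhs, le_div_iff₀ (by positivity)]
  calc |V2 0 s| * (1 - γ) ^ 3 ≤ n2 * (1 - γ) ^ 3 :=
        mul_le_mul_of_nonneg_right hVle (by positivity)
    _ ≤ _ := hfinal
end Core

section Key
set_option maxHeartbeats 1000000
variable {S A : Type*} [Fintype S] [Fintype A] [Nonempty S] [Nonempty A]

lemma sfw_key
    (P : S → A → S → ℝ) (hP : ∀ s a, (∀ s', 0 ≤ P s a s') ∧ ∑ s' : S, P s a s' = 1)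
    (γ : ℝ) (hγ0 : 0 ≤ γ) (hγ1 : γ < 1)
    (πref : S → A → ℝ) (hπref : IsPolicy πref)
    (f : ℝ → ℝ) (hf : ContDiffOn ℝ 2 f (Set.Ioi 0))
    (θ v : S × A → ℝ) (b : ℝ) (hb0 : 0 ≤ b) (hb : ∀ sa, |v sa| ≤ b)
    (V : ℝ → S → ℝ)
    (hBell : ∀ l : ℝ, IsRegularizerValue P γ f πref (sfwP θ v l) (V l))
    (s : S) :
    |iteratedDeriv 2 (fun l : ℝ => V l s) 0| ≤
      4 * γ * b / (1 - γ) ^ 2 *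
        (⨆ s' : S, |deriv (fun l : ℝ => fDiv f (sfwP θ v l s') (πref s')) 0|) +
      8 * γ * b ^ 2 / (1 - γ) ^ 3 *
        (⨆ s' : S, |fDiv f (softmaxPolicy θ s') (πref s')|) +
      1 / (1 - γ) *
        (⨆ s' : S, |iteratedDeriv 2 (fun l : ℝ => fDiv f (sfwP θ v l s') (πref s')) 0|) := by
  have hsp0 : softmaxPolicy θ = sfwP θ v 0 := by
    funext s a
    unfold sfwP softmaxPolicy
    simp
  have hBell' : ∀ l s₀, V l s₀ = fDiv f (sfwP θ v l s₀) (πref s₀) +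
      γ * ∑ a : A, sfwP θ v l s₀ a * ∑ s' : S, P s₀ a s' * V l s' := fun l s₀ => hBell l s₀
  have hDcd : ∀ s', ContDiff ℝ 2 fun l => fDiv f (sfwP θ v l s') (πref s') := fun s' =>
    sfw_fDiv_contDiff θ v πref hπref.1 f hf s'
  have hVcd : ∀ s', ContDiff ℝ 2 fun l => V l s' := fun s' =>
    sfw_value_contDiff P hP γ hγ0 hγ1 (sfwP θ v) (fun s a => sfwP_contDiff θ v s a)
      (sfwP_pos θ v) (sfwP_sum θ v) (fun l s' => fDiv f (sfwP θ v l s') (πref s'))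
      hDcd V hBell' s'
  have hVdiff := fun s' => sfw_contDiff2_diffs (hVcd s')
  have hDdiff := fun s' => sfw_contDiff2_diffs (hDcd s')
  -- first-derivative Bellman identity
  have hE1 : ∀ (l : ℝ) s₀, deriv (fun t => V t s₀) l =
      deriv (fun t => fDiv f (sfwP θ v t s₀) (πref s₀)) l +
      γ * ∑ a : A, (sfwQ θ v l s₀ a * (∑ s' : S, P s₀ a s' * V l s') +
        sfwP θ v l s₀ a * (∑ s' : S, P s₀ a s' * deriv (fun t => V t s') l)) := by
    intro l s₀
    have hfun : (fun t => V t s₀) = fun t => fDiv f (sfwP θ v t s₀) (πref s₀) +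
        γ * ∑ a : A, sfwP θ v t s₀ a * ∑ s' : S, P s₀ a s' * V t s' :=
      funext fun t => hBell' t s₀
    have hD1has : HasDerivAt (fun t => fDiv f (sfwP θ v t s₀) (πref s₀))
        (deriv (fun t => fDiv f (sfwP θ v t s₀) (πref s₀)) l) l :=
      ((hDdiff s₀).1 l).hasDerivAt
    have hsum : HasDerivAt
        (fun t => ∑ a : A, sfwP θ v t s₀ a * ∑ s' : S, P s₀ a s' * V t s')
        (∑ a : A, (sfwQ θ v l s₀ a * (∑ s' : S, P s₀ a s' * V l s') +
          sfwP θ v l s₀ a * (∑ s' : S, P s₀ a s' * deriv (fun t => V t s') l))) l := by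
      refine HasDerivAt.fun_sum fun a _ => (sfwP_hasDerivAt θ v l s₀ a).mul ?_
      exact HasDerivAt.fun_sum fun s' _ =>
        HasDerivAt.const_mul (P s₀ a s') (((hVdiff s').1 l).hasDerivAt)
    have hR := hD1has.add (hsum.const_mul γ)
    calc deriv (fun t => V t s₀) l
        = deriv (fun t => fDiv f (sfwP θ v t s₀) (πref s₀) +
            γ * ∑ a : A, sfwP θ v t s₀ a * ∑ s' : S, P s₀ a s' * V t s') l := by
          rw [hfun]
      _ = _ := hR.deriv
  -- second-derivative Bellman identity at 0
  have hE2 : ∀ s₀, deriv (fun t => deriv (fun u => V u s₀) t) 0 =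
      deriv (fun t => deriv (fun u => fDiv f (sfwP θ v u s₀) (πref s₀)) t) 0 +
      γ * ∑ a : A,
        (sfwR θ v 0 s₀ a * (∑ s' : S, P s₀ a s' * V 0 s') +
          sfwQ θ v 0 s₀ a * (∑ s' : S, P s₀ a s' * deriv (fun u => V u s') 0) +
        (sfwQ θ v 0 s₀ a * (∑ s' : S, P s₀ a s' * deriv (fun u => V u s') 0) +
          sfwP θ v 0 s₀ a *
            (∑ s' : S, P s₀ a s' * deriv (fun t => deriv (fun u => V u s') t) 0))) := by
    intro s₀
    have hfun2 : (fun t => deriv (fun u => V u s₀) t) =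
        fun t => deriv (fun u => fDiv f (sfwP θ v u s₀) (πref s₀)) t +
          γ * ∑ a : A, (sfwQ θ v t s₀ a * (∑ s' : S, P s₀ a s' * V t s') +
            sfwP θ v t s₀ a * (∑ s' : S, P s₀ a s' * deriv (fun u => V u s') t)) :=
      funext fun t => hE1 t s₀
    have hD2has : HasDerivAt (fun t => deriv (fun u => fDiv f (sfwP θ v u s₀) (πref s₀)) t)
        (deriv (fun t => deriv (fun u => fDiv f (sfwP θ v u s₀) (πref s₀)) t) 0) 0 :=
      ((hDdiff s₀).2 0).hasDerivAt
    have hsum2 : HasDerivAt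
        (fun t => ∑ a : A, (sfwQ θ v t s₀ a * (∑ s' : S, P s₀ a s' * V t s') +
          sfwP θ v t s₀ a * (∑ s' : S, P s₀ a s' * deriv (fun u => V u s') t)))
        (∑ a : A,
          (sfwR θ v 0 s₀ a * (∑ s' : S, P s₀ a s' * V 0 s') +
            sfwQ θ v 0 s₀ a * (∑ s' : S, P s₀ a s' * deriv (fun u => V u s') 0) +
          (sfwQ θ v 0 s₀ a * (∑ s' : S, P s₀ a s' * deriv (fun u => V u s') 0) +
            sfwP θ v 0 s₀ a *
              (∑ s' : S, P s₀ a s' * deriv (fun t => deriv (fun u => V u s') t) 0)))) 0 := by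
      refine HasDerivAt.fun_sum fun a _ => HasDerivAt.add ?_ ?_
      · refine (sfwQ_hasDerivAt θ v 0 s₀ a).mul ?_
        exact HasDerivAt.fun_sum fun s' _ =>
          HasDerivAt.const_mul (P s₀ a s') (((hVdiff s').1 0).hasDerivAt)
      · refine (sfwP_hasDerivAt θ v 0 s₀ a).mul ?_
        exact HasDerivAt.fun_sum fun s' _ =>
          HasDerivAt.const_mul (P s₀ a s') (((hVdiff s').2 0).hasDerivAt)
    have hR2 := hD2has.add (hsum2.const_mul γ)
    calc deriv (fun t => deriv (fun u => V u s₀) t) 0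
        = deriv (fun t => deriv (fun u => fDiv f (sfwP θ v u s₀) (πref s₀)) t +
            γ * ∑ a : A, (sfwQ θ v t s₀ a * (∑ s' : S, P s₀ a s' * V t s') +
              sfwP θ v t s₀ a * (∑ s' : S, P s₀ a s' * deriv (fun u => V u s') t))) 0 := by
          rw [hfun2]
      _ = _ := hR2.deriv
  simp only [sfw_iteratedDeriv_two, hsp0]
  exact sfw_core P hP γ hγ0 hγ1 b hb0 (sfwP θ v) (sfwQ θ v) (sfwR θ v)
    (sfwP_pos θ v) (sfwP_sum θ v)
    (fun l s₀ => sfwQ_abs_sum_le θ v l s₀ hb) (fun l s₀ => sfwR_abs_sum_le θ v l s₀ hb hb0)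
    (fun l s' => fDiv f (sfwP θ v l s') (πref s'))
    (fun l s' => deriv (fun t => fDiv f (sfwP θ v t s') (πref s')) l)
    (fun l s' => deriv (fun t => deriv (fun u => fDiv f (sfwP θ v u s') (πref s')) t) l)
    V
    (fun l s' => deriv (fun t => V t s') l)
    (fun l s' => deriv (fun t => deriv (fun u => V u s') t) l)
    hBell' hE1 hE2 s

end Key

/-- (Smoothness framework) Suppose `f` is twice continuously
differentiable on `(0,∞)`. For any `θ, v ∈ ℝ^{S×A}` and any state `s`, the second
derivative at `l = 0` of `l ↦ V_f^{π_{θ+lv}}(s)` satisfies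
`|d²/dl² V_f^{π_{θ+lv}}(s)|_{l=0}| ≤ (4γ‖v‖₂/(1−γ)²)·‖D D_f(θ)[v]‖_∞ +
(8γ‖v‖₂²/(1−γ)³)·‖D_f(θ)‖_∞ + (1/(1−γ))·‖D² D_f(θ)[v,v]‖_∞`. -/
theorem smoothness_framework
    {S A : Type*} [Fintype S] [Fintype A] [Nonempty S] [Nonempty A]
    (P : S → A → S → ℝ) (hP : ∀ s a, (∀ s', 0 ≤ P s a s') ∧ ∑ s' : S, P s a s' = 1)
    (γ : ℝ) (hγ0 : 0 ≤ γ) (hγ1 : γ < 1)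
    (πref : S → A → ℝ) (hπref : IsPolicy πref)
    (f : ℝ → ℝ) (hfconv : ConvexOn ℝ (Set.Ioi 0) f) (hf1 : f 1 = 0)
    (hf : ContDiffOn ℝ 2 f (Set.Ioi 0))
    (Vf : EuclideanSpace ℝ (S × A) → S → ℝ)
    (hVf : ∀ θ, IsRegularizerValue P γ f πref (softmaxPolicy θ) (Vf (WithLp.toLp 2 θ)))
    (θ v : EuclideanSpace ℝ (S × A)) (s : S) :
    |iteratedDeriv 2 (fun l : ℝ => Vf (θ + l • v) s) 0| ≤
      4 * γ * ‖v‖ / (1 - γ) ^ 2 *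
        (⨆ s' : S,
          |deriv (fun l : ℝ => fDiv f (softmaxPolicy (θ + l • v) s') (πref s')) 0|) +
      8 * γ * ‖v‖ ^ 2 / (1 - γ) ^ 3 *
        (⨆ s' : S, |fDiv f (softmaxPolicy θ s') (πref s')|) +
      1 / (1 - γ) *
        (⨆ s' : S,
          |iteratedDeriv 2
            (fun l : ℝ => fDiv f (softmaxPolicy (θ + l • v) s') (πref s')) 0|) := by
  have hvb : ∀ sa : S × A, |v sa| ≤ ‖v‖ := by
    intro sa
    rw [EuclideanSpace.norm_eq]
    calc |v sa| = Real.sqrt (‖v sa‖ ^ 2) := by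
          rw [Real.norm_eq_abs, Real.sqrt_sq_eq_abs, abs_abs]
      _ ≤ _ := Real.sqrt_le_sqrt (Finset.single_le_sum
          (f := fun i => ‖v i‖ ^ 2) (fun i _ => by positivity) (Finset.mem_univ sa))
  exact sfw_key P hP γ hγ0 hγ1 πref hπref f hf θ v ‖v‖ (norm_nonneg v) hvb
    (fun l => Vf (θ + l • v)) (fun l => hVf (θ + l • v)) s
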